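/- Let T be a symmetric operator on a Hilbert space with dense domain D. Suppose for some s > 0 there exist bounded operators B₊, B₋ with B₊ D ⊆ D, B₋ D ⊆ D and bounded operators S₊, S₋ with ‖S₊‖ < 1, ‖S₋‖ < 1 such that (T + is)B₊ = 1 + S₊ and (T − is)B₋ = 1 + S₋ on D. Then T is essentially self-adjoint on D. -/

import Mathlib

open ContinuousLinearMap

lemma dense_of_oneAdd_image {H : Type*} [NormedAddCommGroup H] [NormedSpace ℂ H]
    [CompleteSpace H] (D : Set H) (hdense : Dense D) (S : H →L[ℂ] H) (hS : ‖S‖ < 1)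
    (A : Set H) (h : ∀ x ∈ D, x + S x ∈ A) : Dense A := by
  have hS' : ‖-S‖ < 1 := by simpa using hS
  let u : (H →L[ℂ] H)ˣ := Units.oneSub (-S) hS'
  let e : H ≃L[ℂ] H := ContinuousLinearEquiv.ofUnit u
  have he : ∀ x : H, e x = x + S x := by
    intro x
    show (u : H →L[ℂ] H) x = _
    simp [u, Units.oneSub, sub_eq_add_neg]
  have hd : Dense (e '' D) := by
    have : DenseRange (⇑e) := e.surjective.denseRange
    exact this.dense_image e.continuous hdense
  refine hd.mono ?_
  rintro _ ⟨x, hx, rfl⟩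
  rw [he]
  exact h x hx

/-- Let `T` be a symmetric operator on a Hilbert space with dense domain
`D`.  Suppose for some `s > 0` there exist bounded operators `B₊`, `B₋` mapping `D` into `D`
and bounded operators `S₊`, `S₋` with `‖S₊‖ < 1`, `‖S₋‖ < 1` such that
`(T + is) B₊ = 1 + S₊` and `(T - is) B₋ = 1 + S₋` on `D`.  Then `T` is essentially
self-adjoint on `D`, formalized by the standard criterion that the ranges of `T ± is`
(on `D`) are dense, equivalently `Ker(T* ∓ is) = {0}`. -/
theorem space_adiabatic_stmt12
    {H : Type*} [NormedAddCommGroup H] [InnerProductSpace ℂ H] [CompleteSpace H]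
    (D : Submodule ℂ H) (hdense : Dense (D : Set H))
    (T : D →ₗ[ℂ] H)
    (hsym : ∀ x y : D, (inner ℂ (T x) (y : H) : ℂ) = inner ℂ (x : H) (T y))
    (s : ℝ) (hs : 0 < s)
    (Bp Bm Sp Sm : H →L[ℂ] H)
    (hBpD : ∀ x ∈ D, Bp x ∈ D) (hBmD : ∀ x ∈ D, Bm x ∈ D)
    (hSp : ‖Sp‖ < 1) (hSm : ‖Sm‖ < 1)
    (heqp : ∀ x : D, T ⟨Bp x, hBpD x x.2⟩ + (Complex.I * s) • (Bp (x : H)) = (x : H) + Sp x)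
    (heqm : ∀ x : D, T ⟨Bm x, hBmD x x.2⟩ - (Complex.I * s) • (Bm (x : H)) = (x : H) + Sm x) :
    Dense {y : H | ∃ x : D, y = T x + (Complex.I * s) • (x : H)} ∧
    Dense {y : H | ∃ x : D, y = T x - (Complex.I * s) • (x : H)} := by
  constructor
  · refine dense_of_oneAdd_image (D : Set H) hdense Sp hSp _ ?_
    intro x hx
    exact ⟨⟨Bp x, hBpD x hx⟩, (heqp ⟨x, hx⟩).symm⟩
  · refine dense_of_oneAdd_image (D : Set H) hdense Sm hSm _ ?_
    intro x hx
    exact ⟨⟨Bm x, hBmD x hx⟩, (heqm ⟨x, hx⟩).symm⟩
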